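/- Let X, U, Y be complex Hilbert spaces and let Σ = (A,B,C,D) be a passive system. Let X^c be the controllable subspace and X^o the observable subspace of Σ, let P_{X^o} : X → X denote the orthogonal projection onto X^o, and let X' be the closure of P_{X^o}(X^c). Define A' : X' → X' by A' = P_{X'}∘A∘ι_{X'}, B' : U → X' by B' = P_{X'}∘B and C' : X' → Y by C' = C∘ι_{X'}, where P_{X'} is the orthogonal projection of X onto X' and ι_{X'} the inclusion of X' into X. Then: (i) the system Σ' = (A',B',C',D) is passive; (ii) C'∘A'ⁿ∘B' = C∘Aⁿ∘B for every n ≥ 0 (so Σ' realizes the same transfer function as Σ); and (iii) Σ' is minimal, i.e. the closed linear span of ⋃_{n ≥ 0} range(A'ⁿ∘B') equals X' and the closed linear span of ⋃_{n ≥ 0} range((A'*)ⁿ∘C'*) equals X'. -/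

import Mathlib

/-!
STATEMENT 6: The first minimal restriction of a passive system.  Given a passive
system Σ = (A,B,C,D), let X' be the closure of P_{X^o}(X^c).  With
A' = P_{X'}∘A∘ι_{X'}, B' = P_{X'}∘B, C' = C∘ι_{X'}, the system Σ' = (A',B',C',D)
is passive, has the same moments C'A'ⁿB' = CAⁿB (hence the same transfer function),
and is minimal (controllable and observable).
-/

noncomputable section

open ContinuousLinearMap

variable {X U Y : Type*}
  [NormedAddCommGroup X] [InnerProductSpace ℂ X] [CompleteSpace X]
  [NormedAddCommGroup U] [InnerProductSpace ℂ U] [CompleteSpace U]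
  [NormedAddCommGroup Y] [InnerProductSpace ℂ Y] [CompleteSpace Y]

/-- The controllable subspace `X^c` of the system. -/
def contSub (A : X →L[ℂ] X) (B : U →L[ℂ] X) : Submodule ℂ X :=
  (Submodule.span ℂ (⋃ n : ℕ, Set.range fun u : U => (A ^ n) (B u))).topologicalClosure

/-- The observable subspace `X^o` of the system. -/
def obsSub (A : X →L[ℂ] X) (C : X →L[ℂ] Y) : Submodule ℂ X :=
  (Submodule.span ℂ (⋃ n : ℕ, Set.range fun y : Y =>
    ((ContinuousLinearMap.adjoint A) ^ n) ((ContinuousLinearMap.adjoint C) y))).topologicalClosure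

instance (A : X →L[ℂ] X) (C : X →L[ℂ] Y) : CompleteSpace (obsSub A C) :=
  (Submodule.isClosed_topologicalClosure _).completeSpace_coe

/-- Orthogonal projection of `X` onto the observable subspace `X^o`, viewed as an
operator `X → X`. -/
def projObs (A : X →L[ℂ] X) (C : X →L[ℂ] Y) : X →L[ℂ] X :=
  (obsSub A C).subtypeL.comp (Submodule.orthogonalProjectionOnto (obsSub A C))

/-- The state space `X'` of the first minimal restriction: the closure of
`P_{X^o}(X^c)`. -/
def Xprime (A : X →L[ℂ] X) (B : U →L[ℂ] X) (C : X →L[ℂ] Y) : Submodule ℂ X :=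
  ((contSub A B).map (projObs A C).toLinearMap).topologicalClosure

instance (A : X →L[ℂ] X) (B : U →L[ℂ] X) (C : X →L[ℂ] Y) :
    CompleteSpace (Xprime A B C) :=
  (Submodule.isClosed_topologicalClosure _).completeSpace_coe

/-- The main operator `A' = P_{X'}∘A∘ι_{X'}` of the first minimal restriction. -/
def Aprime (A : X →L[ℂ] X) (B : U →L[ℂ] X) (C : X →L[ℂ] Y) :
    Xprime A B C →L[ℂ] Xprime A B C :=
  (Submodule.orthogonalProjectionOnto (Xprime A B C)).comp (A.comp (Xprime A B C).subtypeL)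

/-- The control operator `B' = P_{X'}∘B` of the first minimal restriction. -/
def Bprime (A : X →L[ℂ] X) (B : U →L[ℂ] X) (C : X →L[ℂ] Y) : U →L[ℂ] Xprime A B C :=
  (Submodule.orthogonalProjectionOnto (Xprime A B C)).comp B

/-- The observation operator `C' = C∘ι_{X'}` of the first minimal restriction. -/
def Cprime (A : X →L[ℂ] X) (B : U →L[ℂ] X) (C : X →L[ℂ] Y) : Xprime A B C →L[ℂ] Y :=
  C.comp (Xprime A B C).subtypeL

set_option linter.unusedSectionVars false
local notation "⟪" x ", " y "⟫" => @inner ℂ _ _ x y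

section Aux

variable (A : X →L[ℂ] X) (B : U →L[ℂ] X) (C : X →L[ℂ] Y)

lemma gen_mem_contSub (n : ℕ) (u : U) : (A ^ n) (B u) ∈ contSub A B :=
  (Submodule.span ℂ _).le_topologicalClosure
    (Submodule.subset_span (Set.mem_iUnion.2 ⟨n, Set.mem_range_self u⟩))

lemma B_mem_contSub (u : U) : B u ∈ contSub A B := by
  simpa using gen_mem_contSub A B 0 u

lemma contSub_A_inv {x : X} (hx : x ∈ contSub A B) : A x ∈ contSub A B := by
  have hmaps : Set.MapsTo A
      (Submodule.span ℂ (⋃ n : ℕ, Set.range fun u : U => (A ^ n) (B u)) : Set X)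
      (Submodule.span ℂ (⋃ n : ℕ, Set.range fun u : U => (A ^ n) (B u)) : Set X) := by
    intro v hv
    have hle : Submodule.map A.toLinearMap
        (Submodule.span ℂ (⋃ n : ℕ, Set.range fun u : U => (A ^ n) (B u))) ≤
        Submodule.span ℂ (⋃ n : ℕ, Set.range fun u : U => (A ^ n) (B u)) := by
      rw [Submodule.map_span]
      apply Submodule.span_le.2
      rintro _ ⟨w, hw, rfl⟩
      rcases Set.mem_iUnion.1 hw with ⟨n, hn⟩
      rcases hn with ⟨u, rfl⟩
      apply Submodule.subset_span
      refine Set.mem_iUnion.2 ⟨n + 1, ⟨u, ?_⟩⟩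
      rw [pow_succ']
      rfl
    exact hle ⟨v, hv, rfl⟩
  exact map_mem_closure A.continuous hx hmaps

lemma gen_mem_obsSub (n : ℕ) (y : Y) :
    ((adjoint A) ^ n) ((adjoint C) y) ∈ obsSub A C :=
  (Submodule.span ℂ _).le_topologicalClosure
    (Submodule.subset_span (Set.mem_iUnion.2 ⟨n, Set.mem_range_self y⟩))

lemma Cstar_mem_obsSub (y : Y) : adjoint C y ∈ obsSub A C := by
  simpa using gen_mem_obsSub A C 0 y

lemma obsSub_Astar_inv {x : X} (hx : x ∈ obsSub A C) : adjoint A x ∈ obsSub A C := by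
  have hmaps : Set.MapsTo (adjoint A)
      (Submodule.span ℂ (⋃ n : ℕ, Set.range fun y : Y =>
        ((adjoint A) ^ n) ((adjoint C) y)) : Set X)
      (Submodule.span ℂ (⋃ n : ℕ, Set.range fun y : Y =>
        ((adjoint A) ^ n) ((adjoint C) y)) : Set X) := by
    intro v hv
    have hle : Submodule.map (adjoint A).toLinearMap
        (Submodule.span ℂ (⋃ n : ℕ, Set.range fun y : Y =>
          ((adjoint A) ^ n) ((adjoint C) y))) ≤
        Submodule.span ℂ (⋃ n : ℕ, Set.range fun y : Y =>
          ((adjoint A) ^ n) ((adjoint C) y)) := by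
      rw [Submodule.map_span]
      apply Submodule.span_le.2
      rintro _ ⟨w, hw, rfl⟩
      rcases Set.mem_iUnion.1 hw with ⟨n, hn⟩
      rcases hn with ⟨y, rfl⟩
      apply Submodule.subset_span
      refine Set.mem_iUnion.2 ⟨n + 1, ⟨y, ?_⟩⟩
      rw [pow_succ']
      rfl
    exact hle ⟨v, hv, rfl⟩
  exact map_mem_closure (adjoint A).continuous hx hmaps

/-- `A` maps `(X^o)ᗮ` into itself. -/
lemma orthObs_A_inv {v : X} (hv : v ∈ (obsSub A C)ᗮ) : A v ∈ (obsSub A C)ᗮ := by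
  intro w hw
  calc ⟪w, A v⟫ = ⟪adjoint A w, v⟫ := (ContinuousLinearMap.adjoint_inner_left A v w).symm
    _ = 0 := hv (adjoint A w) (obsSub_Astar_inv A C hw)

/-- `C` vanishes on `(X^o)ᗮ`. -/
lemma C_eq_zero_of_mem_orthObs {v : X} (hv : v ∈ (obsSub A C)ᗮ) : C v = 0 := by
  rw [← inner_self_eq_zero (𝕜 := ℂ)]
  calc ⟪C v, C v⟫ = ⟪adjoint C (C v), v⟫ :=
        (ContinuousLinearMap.adjoint_inner_left C v (C v)).symm
    _ = 0 := hv (adjoint C (C v)) (Cstar_mem_obsSub A C (C v))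

lemma sub_projObs_mem_orthObs (v : X) : v - projObs A C v ∈ (obsSub A C)ᗮ :=
  Submodule.sub_starProjection_mem_orthogonal v

lemma projObs_mem_obsSub (v : X) : projObs A C v ∈ obsSub A C :=
  (Submodule.orthogonalProjectionOnto (obsSub A C) v).2

lemma projObs_eq_zero_of_mem_orthObs {v : X} (hv : v ∈ (obsSub A C)ᗮ) :
    projObs A C v = 0 := by
  have h : Submodule.orthogonalProjectionOnto (obsSub A C) v = 0 :=
    Submodule.orthogonalProjectionOnto_apply_of_mem_orthogonal hv
  simp [projObs, h]

lemma norm_projObs_le (v : X) : ‖projObs A C v‖ ≤ ‖v‖ := by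
  calc ‖projObs A C v‖ = ‖Submodule.orthogonalProjectionOnto (obsSub A C) v‖ := rfl
    _ ≤ ‖Submodule.orthogonalProjectionOnto (obsSub A C)‖ * ‖v‖ :=
        (Submodule.orthogonalProjectionOnto (obsSub A C)).le_opNorm v
    _ ≤ 1 * ‖v‖ := by gcongr; exact Submodule.orthogonalProjectionOnto_norm_le _
    _ = ‖v‖ := one_mul _

lemma Xprime_le_obsSub : Xprime A B C ≤ obsSub A C := by
  apply Submodule.topologicalClosure_minimal
  · rintro _ ⟨v, _, rfl⟩
    exact projObs_mem_obsSub A C v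
  · exact Submodule.isClosed_topologicalClosure _

lemma orthObs_le_orthXprime : (obsSub A C)ᗮ ≤ (Xprime A B C)ᗮ :=
  Submodule.orthogonal_le (Xprime_le_obsSub A B C)

lemma projObs_A_projObs (v : X) :
    projObs A C (A (projObs A C v)) = projObs A C (A v) := by
  have h1 : projObs A C v - v ∈ (obsSub A C)ᗮ := by
    simpa [neg_sub] using neg_mem (sub_projObs_mem_orthObs A C v)
  have h2 : A (projObs A C v) - A v ∈ (obsSub A C)ᗮ := by
    simpa [map_sub] using orthObs_A_inv A C h1
  have h3 : projObs A C (A (projObs A C v)) - projObs A C (A v) = 0 := by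
    rw [← map_sub]
    exact projObs_eq_zero_of_mem_orthObs A C h2
  exact sub_eq_zero.mp h3

lemma projObs_mem_Xprime_of_contSub {v : X} (hv : v ∈ contSub A B) :
    projObs A C v ∈ Xprime A B C :=
  Submodule.le_topologicalClosure _ (Submodule.mem_map.2 ⟨v, hv, rfl⟩)

/-- `P ∘ A` maps `X'` into `X'`. -/
lemma projObs_A_mem_Xprime {x : X} (hx : x ∈ Xprime A B C) :
    projObs A C (A x) ∈ Xprime A B C := by
  set T : Submodule ℂ X :=
    Submodule.comap ((projObs A C).comp A).toLinearMap (Xprime A B C) with hT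
  have hclosed : IsClosed (T : Set X) := by
    have heq : (T : Set X) = ((projObs A C).comp A) ⁻¹' (Xprime A B C : Set X) := rfl
    rw [heq]
    exact (Submodule.isClosed_topologicalClosure _).preimage
      ((projObs A C).comp A).continuous
  have hle : Xprime A B C ≤ T := by
    apply Submodule.topologicalClosure_minimal _ ?_ hclosed
    rintro _ ⟨v, hv, rfl⟩
    show projObs A C (A (projObs A C v)) ∈ Xprime A B C
    rw [projObs_A_projObs]
    exact projObs_mem_Xprime_of_contSub A B C (contSub_A_inv A B hv)
  exact hle hx

/-- Key formula: `ι ∘ A' = P ∘ A ∘ ι`. -/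
lemma coe_Aprime (x : Xprime A B C) :
    (Aprime A B C x : X) = projObs A C (A x) := by
  have hmem : projObs A C (A (x : X)) ∈ Xprime A B C :=
    projObs_A_mem_Xprime A B C x.2
  have horth : A (x : X) - projObs A C (A (x : X)) ∈ (Xprime A B C)ᗮ :=
    orthObs_le_orthXprime A B C (sub_projObs_mem_orthObs A C (A (x : X)))
  have hsplit : A (x : X) = projObs A C (A (x : X)) +
      (A (x : X) - projObs A C (A (x : X))) := by abel
  show (Submodule.orthogonalProjectionOnto (Xprime A B C) (A (x : X)) : X) = projObs A C (A (x : X))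
  rw [hsplit, map_add,
    Submodule.orthogonalProjectionOnto_mem_subspace_eq_self (K := Xprime A B C) ⟨_, hmem⟩,
    Submodule.orthogonalProjectionOnto_apply_of_mem_orthogonal horth]
  simp

/-- Key formula: `ι ∘ B' = P ∘ B`. -/
lemma coe_Bprime (u : U) :
    (Bprime A B C u : X) = projObs A C (B u) := by
  have hmem : projObs A C (B u) ∈ Xprime A B C :=
    projObs_mem_Xprime_of_contSub A B C (B_mem_contSub A B u)
  have horth : B u - projObs A C (B u) ∈ (Xprime A B C)ᗮ :=
    orthObs_le_orthXprime A B C (sub_projObs_mem_orthObs A C (B u))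
  have hsplit : B u = projObs A C (B u) + (B u - projObs A C (B u)) := by abel
  show (Submodule.orthogonalProjectionOnto (Xprime A B C) (B u) : X) = projObs A C (B u)
  rw [hsplit, map_add,
    Submodule.orthogonalProjectionOnto_mem_subspace_eq_self (K := Xprime A B C) ⟨_, hmem⟩,
    Submodule.orthogonalProjectionOnto_apply_of_mem_orthogonal horth]
  simp

/-- Moments formula at the level of states. -/
lemma coe_pow_Aprime_Bprime (n : ℕ) (u : U) :
    (((Aprime A B C) ^ n) (Bprime A B C u) : X) = projObs A C ((A ^ n) (B u)) := by
  induction n with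
  | zero => simpa using coe_Bprime A B C u
  | succ n ih =>
      have h1 : ((Aprime A B C) ^ (n + 1)) (Bprime A B C u)
          = Aprime A B C (((Aprime A B C) ^ n) (Bprime A B C u)) := by
        rw [pow_succ']; rfl
      rw [h1, coe_Aprime, ih, projObs_A_projObs, pow_succ']
      rfl

end Aux

section Aux2

variable (A : X →L[ℂ] X) (B : U →L[ℂ] X) (C : X →L[ℂ] Y)

lemma closure_map_closure (f : X →L[ℂ] X) (s : Submodule ℂ X) :
    (s.topologicalClosure.map f.toLinearMap).topologicalClosure
      = (s.map f.toLinearMap).topologicalClosure := by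
  apply le_antisymm
  · apply Submodule.topologicalClosure_minimal _ ?_
      (Submodule.isClosed_topologicalClosure _)
    rintro _ ⟨v, hv, rfl⟩
    refine map_mem_closure f.continuous hv fun w hw => ?_
    exact Submodule.mem_map.2 ⟨w, hw, rfl⟩
  · exact Submodule.topologicalClosure_mono
      (Submodule.map_mono (Submodule.le_topologicalClosure s))

lemma topClosure_idem (s : Submodule ℂ X) :
    s.topologicalClosure.topologicalClosure = s.topologicalClosure :=
  le_antisymm
    (Submodule.topologicalClosure_minimal _ le_rfl
      (Submodule.isClosed_topologicalClosure _))
    (Submodule.le_topologicalClosure _)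

lemma dense_in_subspace {p : Submodule ℂ X} (q : Submodule ℂ p)
    (h : (q.map p.subtype).topologicalClosure = p) :
    q.topologicalClosure = ⊤ := by
  rw [Submodule.eq_top_iff']
  intro x
  have hx : (x : X) ∈ closure (Subtype.val '' (q : Set p)) := by
    have hx0 : (x : X) ∈ (q.map p.subtype).topologicalClosure := by rw [h]; exact x.2
    exact hx0
  exact closure_subtype.mpr hx

lemma adjoint_Cprime_apply (y : Y) :
    adjoint (Cprime A B C) y = Submodule.orthogonalProjectionOnto (Xprime A B C) (adjoint C y) := by
  have h : Cprime A B C = C.comp (Xprime A B C).subtypeL := rfl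
  rw [h, adjoint_comp, Submodule.adjoint_subtypeL]
  rfl

lemma adjoint_Aprime_apply (z : Xprime A B C) :
    adjoint (Aprime A B C) z
      = Submodule.orthogonalProjectionOnto (Xprime A B C) (adjoint A z) := by
  have h : Aprime A B C
      = (Submodule.orthogonalProjectionOnto (Xprime A B C)).comp (A.comp (Xprime A B C).subtypeL) := rfl
  rw [h, adjoint_comp, adjoint_comp, Submodule.adjoint_subtypeL,
    Submodule.adjoint_orthogonalProjectionOnto]
  rfl

/-- key step for observability: on `X^o`, projecting to `X'` commutes with `A*`. -/
lemma proj_Astar_proj {w : X} (hw : w ∈ obsSub A C) :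
    Submodule.orthogonalProjectionOnto (Xprime A B C)
        (adjoint A ↑(Submodule.orthogonalProjectionOnto (Xprime A B C) w))
      = Submodule.orthogonalProjectionOnto (Xprime A B C) (adjoint A w) := by
  have hz : (↑(Submodule.orthogonalProjectionOnto (Xprime A B C) w) : X) - w ∈ (Xprime A B C)ᗮ := by
    simpa [neg_sub] using
      neg_mem (Submodule.sub_starProjection_mem_orthogonal (K := Xprime A B C) w)
  have hzobs : (↑(Submodule.orthogonalProjectionOnto (Xprime A B C) w) : X) - w ∈ obsSub A C :=
    sub_mem (Xprime_le_obsSub A B C (Submodule.orthogonalProjectionOnto (Xprime A B C) w).2) hw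
  have hkey : adjoint A ((↑(Submodule.orthogonalProjectionOnto (Xprime A B C) w) : X) - w)
      ∈ (Xprime A B C)ᗮ := by
    intro u hu
    rw [ContinuousLinearMap.adjoint_inner_right]
    have hAu : A u = projObs A C (A u) + (A u - projObs A C (A u)) := by abel
    rw [hAu, inner_add_left]
    have t1 : ⟪projObs A C (A u),
        (↑(Submodule.orthogonalProjectionOnto (Xprime A B C) w) : X) - w⟫ = 0 :=
      Submodule.inner_right_of_mem_orthogonal (projObs_A_mem_Xprime A B C hu) hz
    have t2 : ⟪A u - projObs A C (A u),
        (↑(Submodule.orthogonalProjectionOnto (Xprime A B C) w) : X) - w⟫ = 0 :=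
      Submodule.inner_left_of_mem_orthogonal hzobs (sub_projObs_mem_orthObs A C (A u))
    rw [t1, t2, add_zero]
  have h0 : Submodule.orthogonalProjectionOnto (Xprime A B C)
      (adjoint A ((↑(Submodule.orthogonalProjectionOnto (Xprime A B C) w) : X) - w)) = 0 :=
    Submodule.orthogonalProjectionOnto_apply_of_mem_orthogonal hkey
  rw [map_sub, map_sub] at h0
  exact sub_eq_zero.mp h0

lemma pow_adjoint_Aprime_Cprime (n : ℕ) (y : Y) :
    ((adjoint (Aprime A B C)) ^ n) (adjoint (Cprime A B C) y)
      = Submodule.orthogonalProjectionOnto (Xprime A B C) (((adjoint A) ^ n) (adjoint C y)) := by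
  induction n with
  | zero => simpa using adjoint_Cprime_apply A B C y
  | succ n ih =>
      have h1 : ((adjoint (Aprime A B C)) ^ (n + 1)) (adjoint (Cprime A B C) y)
          = adjoint (Aprime A B C)
              (((adjoint (Aprime A B C)) ^ n) (adjoint (Cprime A B C) y)) := by
        rw [pow_succ']; rfl
      have h2 : ((adjoint A) ^ (n + 1)) (adjoint C y)
          = adjoint A (((adjoint A) ^ n) (adjoint C y)) := by
        rw [pow_succ']; rfl
      rw [h1, ih, adjoint_Aprime_apply, h2]
      exact proj_Astar_proj A B C (gen_mem_obsSub A C n y)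

lemma map_projXp_obsSub :
    (obsSub A C).map
        ((Xprime A B C).subtypeL.comp (Submodule.orthogonalProjectionOnto (Xprime A B C))).toLinearMap
      = Xprime A B C := by
  apply le_antisymm
  · rintro _ ⟨v, _, rfl⟩
    exact (Submodule.orthogonalProjectionOnto (Xprime A B C) v).2
  · intro x hx
    refine ⟨x, Xprime_le_obsSub A B C hx, ?_⟩
    show (↑(Submodule.orthogonalProjectionOnto (Xprime A B C) x) : X) = x
    exact Submodule.starProjection_eq_self_iff.mpr hx

end Aux2

theorem statement6 (A : X →L[ℂ] X) (B : U →L[ℂ] X) (C : X →L[ℂ] Y) (D : U →L[ℂ] Y)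
    (hpass : ∀ (x : X) (u : U),
      ‖A x + B u‖ ^ 2 + ‖C x + D u‖ ^ 2 ≤ ‖x‖ ^ 2 + ‖u‖ ^ 2) :
    (∀ (x : Xprime A B C) (u : U),
        ‖Aprime A B C x + Bprime A B C u‖ ^ 2 + ‖Cprime A B C x + D u‖ ^ 2
          ≤ ‖x‖ ^ 2 + ‖u‖ ^ 2)
    ∧ (∀ n : ℕ,
        (Cprime A B C).comp (((Aprime A B C) ^ n).comp (Bprime A B C))
          = C.comp ((A ^ n).comp B))
    ∧ (Submodule.span ℂ (⋃ n : ℕ, Set.range fun u : U =>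
        ((Aprime A B C) ^ n) (Bprime A B C u))).topologicalClosure = ⊤
    ∧ (Submodule.span ℂ (⋃ n : ℕ, Set.range fun y : Y =>
        ((ContinuousLinearMap.adjoint (Aprime A B C)) ^ n)
          ((ContinuousLinearMap.adjoint (Cprime A B C)) y))).topologicalClosure = ⊤ := by
  refine ⟨?_, ?_, ?_, ?_⟩
  · -- passivity
    intro x u
    have hA : ((Aprime A B C x + Bprime A B C u : Xprime A B C) : X)
        = projObs A C (A ↑x + B u) := by
      rw [Submodule.coe_add, coe_Aprime, coe_Bprime, ← map_add]
    have h1 : ‖Aprime A B C x + Bprime A B C u‖ ≤ ‖A (↑x : X) + B u‖ := by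
      calc ‖Aprime A B C x + Bprime A B C u‖
          = ‖((Aprime A B C x + Bprime A B C u : Xprime A B C) : X)‖ := rfl
        _ = ‖projObs A C (A (↑x : X) + B u)‖ := by rw [hA]
        _ ≤ ‖A (↑x : X) + B u‖ := norm_projObs_le A C _
    have h2 : Cprime A B C x + D u = C (↑x : X) + D u := rfl
    have h3 := hpass (↑x : X) u
    have h4 : ‖Aprime A B C x + Bprime A B C u‖ ^ 2 ≤ ‖A (↑x : X) + B u‖ ^ 2 :=
      pow_le_pow_left₀ (norm_nonneg _) h1 2
    have h5 : ‖x‖ = ‖(x : X)‖ := rfl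
    rw [h2, h5]
    linarith
  · -- moments
    intro n
    ext u
    simp only [ContinuousLinearMap.comp_apply]
    have hcoe := coe_pow_Aprime_Bprime A B C n u
    have horth : projObs A C ((A ^ n) (B u)) - (A ^ n) (B u) ∈ (obsSub A C)ᗮ := by
      simpa [neg_sub] using neg_mem (sub_projObs_mem_orthObs A C ((A ^ n) (B u)))
    have hC : C (projObs A C ((A ^ n) (B u))) = C ((A ^ n) (B u)) := by
      have h0 := C_eq_zero_of_mem_orthObs A C horth
      rw [map_sub, sub_eq_zero] at h0
      exact h0
    calc (Cprime A B C) (((Aprime A B C) ^ n) (Bprime A B C u))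
        = C ↑(((Aprime A B C) ^ n) (Bprime A B C u)) := rfl
      _ = C ((A ^ n) (B u)) := by rw [hcoe, hC]
  · -- controllability
    apply dense_in_subspace
    have h1 : (Submodule.span ℂ (⋃ n : ℕ, Set.range fun u : U =>
          ((Aprime A B C) ^ n) (Bprime A B C u))).map (Xprime A B C).subtype
        = Submodule.map (projObs A C).toLinearMap
            (Submodule.span ℂ (⋃ n : ℕ, Set.range fun u : U => (A ^ n) (B u))) := by
      rw [Submodule.map_span, Submodule.map_span]
      congr 1
      rw [Set.image_iUnion, Set.image_iUnion]
      refine Set.iUnion_congr fun n => ?_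
      rw [← Set.range_comp, ← Set.range_comp]
      exact congrArg Set.range (funext fun u => coe_pow_Aprime_Bprime A B C n u)
    rw [h1, ← closure_map_closure]
    rfl
  · -- observability
    apply dense_in_subspace
    have h1 : (Submodule.span ℂ (⋃ n : ℕ, Set.range fun y : Y =>
          ((adjoint (Aprime A B C)) ^ n) ((adjoint (Cprime A B C)) y))).map
            (Xprime A B C).subtype
        = Submodule.map
            ((Xprime A B C).subtypeL.comp (Submodule.orthogonalProjectionOnto (Xprime A B C))).toLinearMap
            (Submodule.span ℂ (⋃ n : ℕ, Set.range fun y : Y =>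
              ((adjoint A) ^ n) ((adjoint C) y))) := by
      rw [Submodule.map_span, Submodule.map_span]
      congr 1
      rw [Set.image_iUnion, Set.image_iUnion]
      refine Set.iUnion_congr fun n => ?_
      rw [← Set.range_comp, ← Set.range_comp]
      exact congrArg Set.range (funext fun y =>
        congrArg Subtype.val (pow_adjoint_Aprime_Cprime A B C n y))
    rw [h1, ← closure_map_closure]
    show ((obsSub A C).map
        ((Xprime A B C).subtypeL.comp (Submodule.orthogonalProjectionOnto (Xprime A B C))).toLinearMap
      ).topologicalClosure = Xprime A B C
    rw [map_projXp_obsSub]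
    exact topClosure_idem _


end
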